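/- Let d : ℕ → A be admissible. Then for every n ≥ 1, the number of distinct predecessor sets of words of length n in X_d equals the number of distinct words of length n occurring in d: |P(n)| = Φ_n(d). -/

import Mathlib

namespace BetaShift

variable {A : Type*}

/-- The shift map: `(shift x) n = x (n+1)`. -/
def shift (x : ℕ → A) : ℕ → A := fun n => x (n + 1)

/-- Lexicographic order on one-sided sequences: `x = y`, or there is an index `i`
such that `x j = y j` for all `j < i` and `x i < y i`. -/
def SeqLe [LinearOrder A] (x y : ℕ → A) : Prop :=
  x = y ∨ ∃ i, (∀ j, j < i → x j = y j) ∧ x i < y i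

/-- A word `w` occurs in the sequence `x`. -/
def Occurs (w : List A) (x : ℕ → A) : Prop :=
  ∃ i : ℕ, ∀ j : Fin w.length, x (i + j) = w.get j

/-- `Complexity x n` is the number `Φ_n(x)` of distinct words of length `n` occurring in `x`. -/
noncomputable def Complexity (x : ℕ → A) (n : ℕ) : ℕ :=
  Set.ncard {w : List A | w.length = n ∧ Occurs w x}

/-- A sequence is eventually periodic if there are `p ≥ 1` and `N` with
`d (i + p) = d i` for all `i ≥ N`. -/
def EventuallyPeriodic (d : ℕ → A) : Prop :=
  ∃ p, 1 ≤ p ∧ ∃ N, ∀ i, N ≤ i → d (i + p) = d i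

/-- `(d)_k`, the `k`-letter prefix of the sequence `d`, as a word. -/
def prefixWord (d : ℕ → A) (k : ℕ) : List A := List.ofFn (fun i : Fin k => d i)

variable {m : ℕ}

/-- `d` is admissible: every shift of `d` is lexicographically ≤ `d`,
and `d` is not eventually `0`. -/
def Admissible (d : ℕ → Fin m) : Prop :=
  (∀ i, SeqLe (shift^[i] d) d) ∧ ∀ N, ∃ i, N ≤ i ∧ (d i).val ≠ 0

/-- The one-sided β-shift `X_d` determined by the admissible sequence `d`. -/
def XSet (d : ℕ → Fin m) : Set (ℕ → Fin m) :=
  {x | ∀ i, SeqLe (shift^[i] x) d}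

/-- The language of `X_d`: all words occurring in some point of `X_d`. -/
def Lang (d : ℕ → Fin m) : Set (List (Fin m)) :=
  {w | ∃ x ∈ XSet d, Occurs w x}

/-- The follower set of the word `w` in `X_d`. -/
def Fol (d : ℕ → Fin m) (w : List (Fin m)) : Set (List (Fin m)) :=
  {u | w ++ u ∈ Lang d}

/-- The predecessor set of the word `w` in `X_d`. -/
def Pred (d : ℕ → Fin m) (w : List (Fin m)) : Set (List (Fin m)) :=
  {s | s ++ w ∈ Lang d}

/-- The extender set of the word `w` in `X_d`. -/
def Ext (d : ℕ → Fin m) (w : List (Fin m)) : Set (List (Fin m) × List (Fin m)) :=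
  {p | p.1 ++ w ++ p.2 ∈ Lang d}

/-- `|F(n)|`: the number of distinct follower sets of words of length `n` in `X_d`. -/
noncomputable def FolCount (d : ℕ → Fin m) (n : ℕ) : ℕ :=
  Set.ncard {S | ∃ w ∈ Lang d, w.length = n ∧ S = Fol d w}

/-- `|P(n)|`: the number of distinct predecessor sets of words of length `n` in `X_d`. -/
noncomputable def PredCount (d : ℕ → Fin m) (n : ℕ) : ℕ :=
  Set.ncard {S | ∃ w ∈ Lang d, w.length = n ∧ S = Pred d w}

/-- `|E(n)|`: the number of distinct extender sets of words of length `n` in `X_d`. -/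
noncomputable def ExtCount (d : ℕ → Fin m) (n : ℕ) : ℕ :=
  Set.ncard {S | ∃ w ∈ Lang d, w.length = n ∧ S = Ext d w}

/-- The largest `k ≤ n` such that the `k`-letter prefix of `d` is a suffix of `v`
(`k = 0`, the empty prefix, always works). -/
def classIndex (d : ℕ → Fin m) (n : ℕ) (v : List (Fin m)) : ℕ :=
  Nat.findGreatest (fun k => prefixWord d k <:+ v) n

/-- Lexicographic comparison of (equal-length) words: `u = v`, or at the first
index where they differ, `u` takes the smaller value. -/
def WordLe [LinearOrder A] (u v : List A) : Prop :=
  u = v ∨ ∃ i, ∃ (hu : i < u.length) (hv : i < v.length),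
    (∀ j (hju : j < u.length) (hjv : j < v.length), j < i → u.get ⟨j, hju⟩ = v.get ⟨j, hjv⟩) ∧
    u.get ⟨i, hu⟩ < v.get ⟨i, hv⟩

end BetaShift

open BetaShift

namespace S9
variable {m : ℕ}

lemma shift_iter {A : Type*} (x : ℕ → A) (i n : ℕ) : shift^[i] x n = x (n + i) := by
  induction i generalizing x with
  | zero => rfl
  | succ i ih =>
    rw [Function.iterate_succ_apply, ih]
    rfl

def weq (n : ℕ) (x y : ℕ → Fin m) : Prop := ∀ t, t < n → x t = y t
def wlt (n : ℕ) (x y : ℕ → Fin m) : Prop :=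
  ∃ i, i < n ∧ (∀ j, j < i → x j = y j) ∧ x i < y i
def wle (n : ℕ) (x y : ℕ → Fin m) : Prop := weq n x y ∨ wlt n x y
def res (n : ℕ) (x : ℕ → Fin m) : Lex (Fin n → Fin m) := toLex (fun i => x i)

lemma weq_iff {n : ℕ} {x y : ℕ → Fin m} : weq n x y ↔ res n x = res n y := by
  constructor
  · intro h
    exact congrArg toLex (funext fun i => h i i.isLt)
  · intro h t ht
    exact congrFun (toLex.injective h) ⟨t, ht⟩

lemma wlt_iff {n : ℕ} {x y : ℕ → Fin m} : wlt n x y ↔ res n x < res n y := by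
  constructor
  · rintro ⟨i, hi, hb, hlt⟩
    exact ⟨⟨i, hi⟩, fun j hj => hb j hj, hlt⟩
  · rintro ⟨i, hb, hlt⟩
    exact ⟨i, i.isLt, fun j hj => hb ⟨j, lt_trans hj i.isLt⟩ hj, hlt⟩

lemma wle_iff {n : ℕ} {x y : ℕ → Fin m} : wle n x y ↔ res n x ≤ res n y := by
  rw [le_iff_lt_or_eq]
  unfold wle
  rw [wlt_iff, weq_iff]
  tauto


lemma weq_refl {n : ℕ} {x : ℕ → Fin m} : weq n x x := fun _ _ => rfl

lemma wle_congr {n : ℕ} {x x' y y' : ℕ → Fin m} (hx : weq n x x') (hy : weq n y y') :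
    wle n x y ↔ wle n x' y' := by
  rw [wle_iff, wle_iff, weq_iff.mp hx, weq_iff.mp hy]

lemma wlt_congr {n : ℕ} {x x' y y' : ℕ → Fin m} (hx : weq n x x') (hy : weq n y y') :
    wlt n x y ↔ wlt n x' y' := by
  rw [wlt_iff, wlt_iff, weq_iff.mp hx, weq_iff.mp hy]

lemma weq_congr {n : ℕ} {x x' y y' : ℕ → Fin m} (hx : weq n x x') (hy : weq n y y') :
    weq n x y ↔ weq n x' y' := by
  rw [weq_iff, weq_iff, weq_iff.mp hx, weq_iff.mp hy]

lemma wle_trans {n : ℕ} {x y z : ℕ → Fin m} (h1 : wle n x y) (h2 : wle n y z) :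
    wle n x z := by
  rw [wle_iff] at h1 h2 ⊢
  exact le_trans h1 h2

lemma not_weq_wlt {n : ℕ} {x y : ℕ → Fin m} (he : weq n x y) (hl : wlt n x y) : False := by
  obtain ⟨i, hi, -, hlt⟩ := hl
  exact absurd (he i hi) (ne_of_lt hlt)

lemma seqLe_wle {x y : ℕ → Fin m} (h : SeqLe x y) (n : ℕ) : wle n x y := by
  rcases h with h | ⟨i, hb, hi⟩
  · left; intro t _; rw [h]
  · by_cases hin : i < n
    · right; exact ⟨i, hin, hb, hi⟩
    · left; intro t ht; exact hb t (lt_of_lt_of_le ht (not_lt.1 hin))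

variable [NeZero m]

def pad (w : List (Fin m)) : ℕ → Fin m := fun j => w.getD j 0

lemma pad_eq_get (w : List (Fin m)) (j : ℕ) (h : j < w.length) :
    pad w j = w.get ⟨j, h⟩ := List.getD_eq_get (i := ⟨j, h⟩) ..

lemma pad_default (w : List (Fin m)) (j : ℕ) (h : w.length ≤ j) : pad w j = 0 :=
  List.getD_eq_default _ _ h

lemma pad_append_left (s w : List (Fin m)) (j : ℕ) (h : j < s.length) :
    pad (s ++ w) j = pad s j := List.getD_append _ _ _ _ h

lemma pad_append_right (s w : List (Fin m)) (j : ℕ) (h : s.length ≤ j) :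
    pad (s ++ w) j = pad w (j - s.length) := List.getD_append_right _ _ _ _ h

lemma seqLe_of_prefix_zero {d : ℕ → Fin m} (hd : Admissible d) {y : ℕ → Fin m} {k : ℕ}
    (h1 : ∀ t, t < k → y t = d t) (h2 : ∀ t, k ≤ t → y t = 0) : SeqLe y d := by
  classical
  have hex : ∃ t, k ≤ t ∧ (d t).val ≠ 0 := hd.2 k
  obtain ⟨hki0, hd0⟩ := Nat.find_spec hex
  right
  refine ⟨Nat.find hex, ?_, ?_⟩
  · intro j hj
    by_cases hjk : j < k
    · exact h1 j hjk
    · have hmin : ¬ (k ≤ j ∧ (d j).val ≠ 0) := Nat.find_min hex hj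
      have hdj : (d j).val = 0 := by
        by_contra hc
        exact hmin ⟨by omega, hc⟩
      have hdj' : d j = 0 := by
        apply Fin.ext
        rw [hdj, Fin.val_zero]
      rw [h2 j (by omega), hdj']
  · rw [h2 _ hki0, Fin.lt_def, Fin.val_zero]
    omega

lemma wle_split {q n : ℕ} {x y : ℕ → Fin m} :
    wle (q + n) x y ↔
      (wlt q x y ∨ (weq q x y ∧ wle n (fun t => x (q + t)) (fun t => y (q + t)))) := by
  constructor
  · rintro (h | ⟨i, hi, hb, hlt⟩)
    · exact Or.inr ⟨fun t ht => h t (by omega), Or.inl (fun t ht => h (q + t) (by omega))⟩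
    · by_cases hiq : i < q
      · exact Or.inl ⟨i, hiq, hb, hlt⟩
      · refine Or.inr ⟨fun t ht => hb t (by omega), Or.inr ⟨i - q, by omega, ?_, ?_⟩⟩
        · intro j hj
          exact hb (q + j) (by omega)
        · show x (q + (i - q)) < y (q + (i - q))
          have hq : q + (i - q) = i := by omega
          rw [hq]
          exact hlt
  · rintro (⟨i, hi, hb, hlt⟩ | ⟨he, (h | ⟨i, hi, hb, hlt⟩)⟩)
    · exact Or.inr ⟨i, by omega, hb, hlt⟩
    · left
      intro t ht
      by_cases htq : t < q
      · exact he t htq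
      · have h2 : t = q + (t - q) := by omega
        rw [h2]
        exact h (t - q) (by omega)
    · refine Or.inr ⟨q + i, by omega, ?_, hlt⟩
      intro j hj
      by_cases hjq : j < q
      · exact he j hjq
      · have h2 : j = q + (j - q) := by omega
        rw [h2]
        exact hb (j - q) (by omega)


namespace SL
variable {m : ℕ} [NeZero m]
end SL

lemma mem_lang_iff {d : ℕ → Fin m} (hd : Admissible d) (w : List (Fin m)) :
    w ∈ Lang d ↔ ∀ k, k ≤ w.length → wle k (fun t => pad w (w.length - k + t)) d := by
  constructor
  · rintro ⟨x, hx, i, hocc⟩ k hk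
    have h1 : wle k (shift^[i + (w.length - k)] x) d := seqLe_wle (hx _) k
    refine (wle_congr ?_ weq_refl).mp h1
    intro t ht
    show _ = pad w (w.length - k + t)
    rw [shift_iter]
    have hlt : w.length - k + t < w.length := by omega
    have h2 : x (i + (w.length - k + t)) = w.get ⟨w.length - k + t, hlt⟩ :=
      hocc ⟨w.length - k + t, hlt⟩
    rw [pad_eq_get _ _ hlt, ← h2]
    congr 1
    omega
  · intro h
    refine ⟨pad w, ?_, 0, ?_⟩
    · intro i
      by_cases hi : i < w.length
      · have hk := h (w.length - i) (by omega)
        rcases hk with heq | ⟨t0, ht0, hb, hlt⟩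
        · apply seqLe_of_prefix_zero hd (k := w.length - i)
          · intro t ht
            have h2 := heq t ht
            rw [shift_iter]
            rw [← h2]
            congr 1
            omega
          · intro t ht
            rw [shift_iter]
            exact pad_default _ _ (by omega)
        · right
          refine ⟨t0, ?_, ?_⟩
          · intro j hj
            have h2 := hb j hj
            rw [shift_iter, ← h2]
            congr 1
            omega
          · rw [shift_iter]
            have h3 : pad w (t0 + i) = pad w (w.length - (w.length - i) + t0) := by
              congr 1
              omega
            rw [h3]
            exact hlt
      · apply seqLe_of_prefix_zero hd (k := 0)
        · intro t ht
          omega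
        · intro t _
          rw [shift_iter]
          exact pad_default _ _ (by omega)
    · intro j
      rw [zero_add, pad_eq_get _ _ j.isLt]

lemma mem_pred_iff {d : ℕ → Fin m} (hd : Admissible d) {w : List (Fin m)}
    (hw : w ∈ Lang d) (s : List (Fin m)) :
    s ∈ Pred d w ↔ s ∈ Lang d ∧
      ∀ q, q ≤ s.length → weq q (fun t => pad s (s.length - q + t)) d →
        wle w.length (pad w) (fun t => d (q + t)) := by
  have hw' := (mem_lang_iff hd w).mp hw
  rw [show s ∈ Pred d w ↔ s ++ w ∈ Lang d from Iff.rfl, mem_lang_iff hd, mem_lang_iff hd]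
  simp only [List.length_append]
  have hagree : ∀ q, q ≤ s.length →
      weq q (fun t => pad (s ++ w) (s.length + w.length - (q + w.length) + t))
        (fun t => pad s (s.length - q + t)) := by
    intro q hq t ht
    show pad (s ++ w) (s.length + w.length - (q + w.length) + t) = pad s (s.length - q + t)
    rw [pad_append_left _ _ _ (by omega)]
    congr 1
    omega
  have hagree2 : ∀ q, q ≤ s.length →
      weq w.length (fun t => pad (s ++ w) (s.length + w.length - (q + w.length) + (q + t)))
        (pad w) := by
    intro q hq t ht
    show pad (s ++ w) (s.length + w.length - (q + w.length) + (q + t)) = pad w t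
    rw [pad_append_right _ _ _ (by omega)]
    congr 1
    omega
  constructor
  · intro h
    constructor
    · intro q hq
      have h2 := h (q + w.length) (by omega)
      rw [wle_split] at h2
      rcases h2 with hlt | ⟨heq, -⟩
      · exact Or.inr ((wlt_congr (hagree q hq) weq_refl).mp hlt)
      · exact Or.inl ((weq_congr (hagree q hq) weq_refl).mp heq)
    · intro q hq hweq
      have h2 := h (q + w.length) (by omega)
      rw [wle_split] at h2
      rcases h2 with hlt | ⟨heq, hle⟩
      · exact absurd hweq (fun hc => not_weq_wlt hc ((wlt_congr (hagree q hq) weq_refl).mp hlt))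
      · exact (wle_congr (hagree2 q hq) weq_refl).mp hle
  · rintro ⟨hs, himp⟩ k hk
    by_cases hkn : k ≤ w.length
    · have h1 := hw' k hkn
      refine (wle_congr ?_ weq_refl).mpr h1
      intro t ht
      show pad (s ++ w) (s.length + w.length - k + t) = pad w (w.length - k + t)
      rw [pad_append_right _ _ _ (by omega)]
      congr 1
      omega
    · set q := k - w.length with hqdef
      have hq : q ≤ s.length := by omega
      have hkq : k = q + w.length := by omega
      rw [hkq]
      rw [wle_split]
      rcases hs q hq with heq | hlt
      · refine Or.inr ⟨(weq_congr (hagree q hq) weq_refl).mpr heq, ?_⟩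
        exact (wle_congr (hagree2 q hq) weq_refl).mpr (himp q hq heq)
      · exact Or.inl ((wlt_congr (hagree q hq) weq_refl).mpr hlt)

lemma win_le_win {d : ℕ → Fin m} (hd : Admissible d) {k q : ℕ} (hq : q ≤ k)
    (h : weq q (fun t => d (k - q + t)) d) (n : ℕ) :
    wle n (fun t => d (k + t)) (fun t => d (q + t)) := by
  rcases hd.1 (k - q) with h1 | ⟨i, hb, hlt⟩
  · left
    intro t ht
    have h2 := congrFun h1 (q + t)
    rw [shift_iter] at h2
    show d (k + t) = d (q + t)
    rw [← h2]
    congr 1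
    omega
  · rw [shift_iter] at hlt
    have hiq : ¬ i < q := by
      intro hiq
      have h2 := h i hiq
      simp only at h2
      rw [show k - q + i = i + (k - q) by omega] at h2
      exact absurd h2 (ne_of_lt hlt)
    by_cases hin : i < q + n
    · right
      refine ⟨i - q, by omega, ?_, ?_⟩
      · intro j hj
        have h2 := hb (q + j) (by omega)
        rw [shift_iter] at h2
        show d (k + j) = d (q + j)
        rw [← h2]
        congr 1
        omega
      · show d (k + (i - q)) < d (q + (i - q))
        rw [show k + (i - q) = i + (k - q) by omega, show q + (i - q) = i by omega]
        exact hlt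
    · left
      intro t ht
      have h2 := hb (q + t) (by omega)
      rw [shift_iter] at h2
      show d (k + t) = d (q + t)
      rw [← h2]
      congr 1
      omega


lemma length_prefixWord (d : ℕ → Fin m) (k : ℕ) : (prefixWord d k).length = k := by
  simp [prefixWord]

lemma pad_prefixWord (d : ℕ → Fin m) {k t : ℕ} (h : t < k) :
    pad (prefixWord d k) t = d t := by
  have hl : t < (prefixWord d k).length := by rw [length_prefixWord]; exact h
  rw [pad_eq_get _ _ hl]
  simp [prefixWord, List.get_ofFn]

lemma pred_ne {d : ℕ → Fin m} (hd : Admissible d) {w w' : List (Fin m)} {n : ℕ}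
    (hw : w ∈ Lang d) (hw' : w' ∈ Lang d) (hwn : w.length = n) (hw'n : w'.length = n) {k : ℕ}
    (h1 : wle n (pad w) (fun t => d (k + t)))
    (h2 : ¬ wle n (pad w') (fun t => d (k + t))) :
    Pred d w ≠ Pred d w' := by
  intro hEq
  have hsk : (prefixWord d k).length = k := length_prefixWord d k
  have hsmem : prefixWord d k ∈ Pred d w := by
    rw [mem_pred_iff hd hw]
    constructor
    · rw [mem_lang_iff hd]
      intro q hq
      rw [hsk] at hq ⊢
      have h3 : wle q (shift^[k - q] d) d := seqLe_wle (hd.1 (k - q)) q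
      refine (wle_congr ?_ weq_refl).mpr h3
      intro t ht
      show pad (prefixWord d k) (k - q + t) = _
      rw [shift_iter, pad_prefixWord d (show k - q + t < k by omega)]
      congr 1
      omega
    · intro q hq hweq
      rw [hsk] at hq hweq
      have hweq' : weq q (fun t => d (k - q + t)) d := by
        intro t ht
        have h4 := hweq t ht
        rwa [show (fun t => pad (prefixWord d k) (k - q + t)) t
            = d (k - q + t) from pad_prefixWord d (by omega)] at h4
      have h3 := win_le_win hd hq hweq' n
      rw [hwn]
      exact wle_trans h1 h3
  rw [hEq, mem_pred_iff hd hw'] at hsmem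
  apply h2
  rw [← hw'n]
  apply hsmem.2 k (by rw [hsk])
  intro t ht
  rw [hsk]
  show pad (prefixWord d k) (k - k + t) = d t
  rw [show k - k + t = t by omega, pad_prefixWord d ht]

lemma exists_min_window {d : ℕ → Fin m} (hd : Admissible d) {w : List (Fin m)} {n : ℕ}
    (hwn : w.length = n) (hw : w ∈ Lang d) :
    ∃ k, wle n (pad w) (fun t => d (k + t)) ∧
      ∀ j, wle n (pad w) (fun t => d (j + t)) →
        wle n (fun t => d (k + t)) (fun t => d (j + t)) := by
  haveI : Finite (Lex (Fin n → Fin m)) := Finite.of_equiv _ toLex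
  letI : LinearOrder (Lex (Fin n → Fin m)) :=
    @Pi.Lex.linearOrder (Fin n) (fun _ => Fin m) inferInstance
      (inferInstance : WellFoundedLT (Fin n)) (fun _ => inferInstance)
  set V : Set (Lex (Fin n → Fin m)) :=
    {u | (∃ k, u = res n (fun t => d (k + t))) ∧ res n (pad w) ≤ u} with hV
  have hne : V.Nonempty := by
    refine ⟨res n (fun t => d (0 + t)), ⟨0, rfl⟩, ?_⟩
    rw [← wle_iff]
    have h1 := (mem_lang_iff hd w).mp hw n (by omega)
    refine (wle_congr ?_ ?_).mp h1
    · intro t ht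
      show pad w (w.length - n + t) = pad w t
      congr 1
      omega
    · intro t ht
      show d t = d (0 + t)
      congr 1
      omega
  obtain ⟨u, hu, hmin⟩ := Set.exists_min_image V (fun u => u) (Set.toFinite V) hne
  obtain ⟨⟨k, rfl⟩, hle⟩ := hu
  refine ⟨k, wle_iff.mpr hle, fun j hj => ?_⟩
  exact wle_iff.mpr (hmin (res n (fun t => d (j + t))) ⟨⟨j, rfl⟩, wle_iff.mp hj⟩)

lemma pred_eq_of_T {d : ℕ → Fin m} (hd : Admissible d) {w w' : List (Fin m)} {n : ℕ}
    (hw : w ∈ Lang d) (hw' : w' ∈ Lang d) (hwn : w.length = n) (hw'n : w'.length = n)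
    (h : ∀ q, wle n (pad w) (fun t => d (q + t)) ↔ wle n (pad w') (fun t => d (q + t))) :
    Pred d w = Pred d w' := by
  ext s
  rw [mem_pred_iff hd hw s, mem_pred_iff hd hw' s, hwn, hw'n]
  constructor
  · rintro ⟨hl, h2⟩
    exact ⟨hl, fun q hq hweq => (h q).mp (h2 q hq hweq)⟩
  · rintro ⟨hl, h2⟩
    exact ⟨hl, fun q hq hweq => (h q).mpr (h2 q hq hweq)⟩

end S9

open S9 in
theorem S9.main (m : ℕ) (hm : 1 ≤ m) (d : ℕ → Fin m) (hd : Admissible d)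
    (n : ℕ) :
    Set.ncard {S | ∃ w ∈ Lang d, w.length = n ∧ S = Pred d w}
      = Set.ncard {w : List (Fin m) | w.length = n ∧ Occurs w d} := by
  haveI : NeZero m := ⟨by omega⟩
  letI : LinearOrder (Lex (Fin n → Fin m)) :=
    @Pi.Lex.linearOrder (Fin n) (fun _ => Fin m) inferInstance
      (inferInstance : WellFoundedLT (Fin n)) (fun _ => inferInstance)
  have hwinpad : ∀ v : List (Fin m), v.length = n → Occurs v d →
      ∃ k, weq n (pad v) (fun t => d (k + t)) := by
    rintro v hlen ⟨i, hocc⟩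
    refine ⟨i, fun t ht => ?_⟩
    have h2 : d (i + t) = v.get ⟨t, by omega⟩ := hocc ⟨t, by omega⟩
    rw [pad_eq_get _ _ (by omega : t < v.length)]
    exact h2.symm
  have hkey : {S | ∃ w ∈ Lang d, w.length = n ∧ S = Pred d w}
      = Pred d '' {w : List (Fin m) | w.length = n ∧ Occurs w d} := by
    apply Set.Subset.antisymm
    · rintro S ⟨w, hwL, hwn, rfl⟩
      obtain ⟨k, hk1, hk2⟩ := exists_min_window hd hwn hwL
      set u : List (Fin m) := List.ofFn (fun i : Fin n => d (k + i)) with hu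
      have hulen : u.length = n := by simp [hu]
      have hupad : ∀ t, t < n → pad u t = d (k + t) := by
        intro t ht
        rw [pad_eq_get _ _ (by omega : t < u.length)]
        simp [hu, List.get_ofFn]
      have huocc : Occurs u d := by
        refine ⟨k, fun j => ?_⟩
        have hjn : (j : ℕ) < n := by
          have := j.isLt
          omega
        rw [show u.get j = u.get ⟨(j : ℕ), j.isLt⟩ from rfl, ← pad_eq_get _ _ j.isLt,
          hupad (j : ℕ) hjn]
      have huL : u ∈ Lang d := ⟨d, hd.1, huocc⟩
      refine ⟨u, ⟨hulen, huocc⟩, ?_⟩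
      refine (pred_eq_of_T hd huL hwL hulen hwn ?_).symm.symm
      intro q
      have hwin : weq n (pad u) (fun t => d (k + t)) := fun t ht => hupad t ht
      constructor
      · intro h
        exact wle_trans hk1 ((wle_congr hwin weq_refl).mp h)
      · intro h
        exact (wle_congr hwin weq_refl).mpr (hk2 q h)
    · rintro S ⟨u, ⟨hulen, huocc⟩, rfl⟩
      exact ⟨u, ⟨d, hd.1, huocc⟩, hulen, rfl⟩
  have hinj : Set.InjOn (Pred d) {w : List (Fin m) | w.length = n ∧ Occurs w d} := by
    rintro u hu u' hu' hPe
    by_contra hne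
    obtain ⟨k, hk⟩ := hwinpad u hu.1 hu.2
    obtain ⟨k', hk'⟩ := hwinpad u' hu'.1 hu'.2
    have huL : u ∈ Lang d := ⟨d, hd.1, hu.2⟩
    have hu'L : u' ∈ Lang d := ⟨d, hd.1, hu'.2⟩
    have hvne : res n (pad u) ≠ res n (pad u') := by
      intro h
      apply hne
      have hweq := weq_iff.mpr h
      apply List.ext_get (by rw [hu.1, hu'.1])
      intro i h1 h2
      have h3 := hweq i (by
        have := hu.1
        omega)
      rwa [pad_eq_get _ _ h1, pad_eq_get _ _ h2] at h3
    rcases hvne.lt_or_gt with hlt | hlt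
    · refine pred_ne hd huL hu'L hu.1 hu'.1 (k := k) (Or.inl hk) ?_ hPe
      intro hcon
      have hle : res n (pad u') ≤ res n (pad u) := by
        have h1 := wle_iff.mp hcon
        rwa [← weq_iff.mp hk] at h1
      exact absurd hlt (not_lt.mpr hle)
    · refine pred_ne hd hu'L huL hu'.1 hu.1 (k := k') (Or.inl hk') ?_ hPe.symm
      intro hcon
      have hle : res n (pad u) ≤ res n (pad u') := by
        have h1 := wle_iff.mp hcon
        rwa [← weq_iff.mp hk'] at h1
      exact absurd hlt (not_lt.mpr hle)
  rw [hkey, Set.ncard_image_of_injOn hinj]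


/-- `|P(n)| = Φ_n(d)` for every `n ≥ 1`. -/
theorem stmt9 (m : ℕ) (hm : 1 ≤ m) (d : ℕ → Fin m) (hd : Admissible d)
    (n : ℕ) (hn : 1 ≤ n) :
    PredCount d n = Complexity d n :=
  S9.main m hm d hd n
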